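/- Let V₀ > 0, λ > 0 and V(x) = V₀e^{−λx}. Let θ, σ, φ, ψ be differentiable real-valued functions on a real interval satisfying the Einstein–Klein–Gordon evolution system with θ(t) > 0 throughout, and define S = σ/θ, U = √(V(φ))/θ, P = ψ/θ. Then at every time t: θ' = θ²·(−1/3 − 2S² + U² − P²), S' = θ·F_S(S,U,P), U' = θ·F_U(S,U,P), and P' = θ·F_P(S,U,P), where (F_S, F_U, F_P) is the reduced vector field F. -/

import Mathlib

/-- `S`-component of the reduced vector field `F`. -/
noncomputable def FS (lam S U P : ℝ) : ℝ :=
  -1 / (3 * Real.sqrt 3) - (2 / 3) * S + S ^ 2 / Real.sqrt 3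
    + U ^ 2 / Real.sqrt 3 + P ^ 2 / (2 * Real.sqrt 3)
    + 2 * S ^ 3 - S * U ^ 2 + S * P ^ 2

/-- `U`-component of the reduced vector field `F`. -/
noncomputable def FU (lam S U P : ℝ) : ℝ :=
  U * (1 / 3 - (lam / 2) * P + 2 * S ^ 2 - U ^ 2 + P ^ 2)

/-- `P`-component of the reduced vector field `F`. -/
noncomputable def FP (lam S U P : ℝ) : ℝ :=
  -(2 / 3) * P + lam * U ^ 2 + 2 * S ^ 2 * P - U ^ 2 * P + P ^ 3

set_option maxHeartbeats 1000000 in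
/-- For an exponential potential `V(x) = V₀·exp(−λx)` and a
solution of the Einstein–Klein–Gordon evolution system (units `8πG = 1`) with
`θ > 0`, the variables `S = σ/θ`, `U = √(V(φ))/θ`, `P = ψ/θ` satisfy
`θ' = θ²(−1/3 − 2S² + U² − P²)` and `(S, U, P)' = θ·F(S, U, P)`, where `F` is
the reduced vector field (so in the time `τ` with `dτ = θ dt` one has
`(S,U,P)' = F(S,U,P)`). -/
theorem reduced_system
    (V₀ lam : ℝ) (hV₀ : 0 < V₀) (hlam : 0 < lam)
    (V : ℝ → ℝ) (hVdef : ∀ x, V x = V₀ * Real.exp (-lam * x))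
    (θ σ φ ψ : ℝ → ℝ)
    (hθd : Differentiable ℝ θ) (hσd : Differentiable ℝ σ)
    (hφd : Differentiable ℝ φ) (hψd : Differentiable ℝ ψ)
    (eθ : ∀ t, deriv θ t = -(1 / 3) * θ t ^ 2 - 2 * σ t ^ 2 + V (φ t) - ψ t ^ 2)
    (eσ : ∀ t, deriv σ t = -θ t ^ 2 / (3 * Real.sqrt 3) - θ t * σ t
        + σ t ^ 2 / Real.sqrt 3 + (1 / Real.sqrt 3) * (V (φ t) + ψ t ^ 2 / 2))
    (eφ : ∀ t, deriv φ t = ψ t)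
    (eψ : ∀ t, deriv ψ t = -θ t * ψ t - deriv V (φ t))
    (hθpos : ∀ t, 0 < θ t)
    (S U P : ℝ → ℝ)
    (hS : ∀ t, S t = σ t / θ t)
    (hU : ∀ t, U t = Real.sqrt (V (φ t)) / θ t)
    (hP : ∀ t, P t = ψ t / θ t) :
    ∀ t,
      HasDerivAt θ (θ t ^ 2 * (-(1 / 3) - 2 * S t ^ 2 + U t ^ 2 - P t ^ 2)) t ∧
      HasDerivAt S (θ t * FS lam (S t) (U t) (P t)) t ∧
      HasDerivAt U (θ t * FU lam (S t) (U t) (P t)) t ∧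
      HasDerivAt P (θ t * FP lam (S t) (U t) (P t)) t := by
  have hVfun : V = fun x => V₀ * Real.exp (-lam * x) := funext hVdef
  subst hVfun
  have hSf : S = fun t => σ t / θ t := funext hS
  have hUf : U = fun t => Real.sqrt (V₀ * Real.exp (-lam * φ t)) / θ t := funext hU
  have hPf : P = fun t => ψ t / θ t := funext hP
  subst hSf hUf hPf
  intro t
  have hθne : θ t ≠ 0 := (hθpos t).ne'
  have hWpos : 0 < V₀ * Real.exp (-lam * φ t) := by positivity
  have hVd : ∀ x : ℝ, deriv (fun x => V₀ * Real.exp (-lam * x)) x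
      = -lam * (V₀ * Real.exp (-lam * x)) := by
    intro x
    have h : HasDerivAt (fun x => V₀ * Real.exp (-lam * x))
        (V₀ * (Real.exp (-lam * x) * (-lam * 1))) x :=
      (((hasDerivAt_id x).const_mul (-lam)).exp).const_mul V₀
    rw [h.deriv]; ring
  -- base derivatives
  have hθ' : HasDerivAt θ
      (-(1 / 3) * θ t ^ 2 - 2 * σ t ^ 2 + V₀ * Real.exp (-lam * φ t) - ψ t ^ 2) t := by
    have h := (hθd t).hasDerivAt; rwa [eθ t] at h
  have hσ' : HasDerivAt σ
      (-θ t ^ 2 / (3 * Real.sqrt 3) - θ t * σ t + σ t ^ 2 / Real.sqrt 3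
        + (1 / Real.sqrt 3) * (V₀ * Real.exp (-lam * φ t) + ψ t ^ 2 / 2)) t := by
    have h := (hσd t).hasDerivAt; rwa [eσ t] at h
  have hφ' : HasDerivAt φ (ψ t) t := by
    have h := (hφd t).hasDerivAt; rwa [eφ t] at h
  have hψ' : HasDerivAt ψ
      (-θ t * ψ t + lam * (V₀ * Real.exp (-lam * φ t))) t := by
    have h := (hψd t).hasDerivAt
    rw [eψ t, hVd] at h
    refine h.congr_deriv ?_; ring
  have hW' : HasDerivAt (fun t => V₀ * Real.exp (-lam * φ t))
      (V₀ * (Real.exp (-lam * φ t) * (-lam * ψ t))) t :=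
    ((hφ'.const_mul (-lam)).exp).const_mul V₀
  have hsq : HasDerivAt (fun t => Real.sqrt (V₀ * Real.exp (-lam * φ t)))
      (V₀ * (Real.exp (-lam * φ t) * (-lam * ψ t))
        / (2 * Real.sqrt (V₀ * Real.exp (-lam * φ t)))) t :=
    hW'.sqrt hWpos.ne'
  obtain ⟨c, hc0, hc2⟩ : ∃ c : ℝ, 0 < c ∧ c ^ 2 = 3 :=
    ⟨Real.sqrt 3, Real.sqrt_pos.mpr (by norm_num), Real.sq_sqrt (by norm_num)⟩
  have hc : Real.sqrt 3 = c := by rw [← hc2, Real.sqrt_sq hc0.le]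
  obtain ⟨u, hu0, hu2⟩ : ∃ u : ℝ, 0 < u ∧ u ^ 2 = V₀ * Real.exp (-lam * φ t) :=
    ⟨Real.sqrt _, Real.sqrt_pos.mpr hWpos, Real.sq_sqrt hWpos.le⟩
  have hu : Real.sqrt (V₀ * Real.exp (-lam * φ t)) = u := by
    rw [← hu2, Real.sqrt_sq hu0.le]
  refine ⟨?_, ?_, ?_, ?_⟩
  · convert hθ' using 1
    beta_reduce
    rw [hu, ← hu2]
    field_simp
  · refine (hσ'.div hθ' hθne).congr_deriv ?_; symm
    beta_reduce
    rw [FS, hu, hc, ← hu2, show (3:ℝ) = c ^ 2 from hc2.symm]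
    field_simp
    linear_combination 2 * θ t ^ 2 * σ t * c * hc2
  · refine (hsq.div hθ' hθne).congr_deriv ?_; symm
    beta_reduce
    rw [FU, hu, ← hu2]
    field_simp
    linear_combination (norm := ring_nf) (-(3 * θ t * lam * ψ t)) * hu2
  · refine (hψ'.div hθ' hθne).congr_deriv ?_; symm
    beta_reduce
    rw [FP, hu, ← hu2]
    field_simp
    ring
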